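/- Let n be a nonnegative integer and define R_n(a,b,c) = (1−a)_n (b)_n · _4F_3(−n, a, a−c−n, c ; (a−n)/2, (1+a−n)/2, b ; 1/4), and V_n(x,y,z) = R_n( x−y−z, (2+3x−y−z−n)/2, (x+y−3z−n)/2 ). Let x, y, z ∈ ℂ and assume that for every permutation (x',y',z') of (x,y,z), setting a' = x'−y'−z' and b' = (2+3x'−y'−z'−n)/2, the quantities (a'−n)_{2n} and (b')_n are nonzero. Then V_n(x,y,z) is invariant under all six permutations of (x,y,z); that is, V_n(x,y,z) = V_n(x,z,y) = V_n(y,x,z) = V_n(y,z,x) = V_n(z,x,y) = V_n(z,y,x). -/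
import Mathlib


open Finset

/-- The rising factorial (Pochhammer symbol) `(a)_k = a(a+1)⋯(a+k-1)`. -/
noncomputable def poch (a : ℂ) (k : ℕ) : ℂ := ∏ i ∈ Finset.range k, (a + i)


lemma poch_zero (a : ℂ) : poch a 0 = 1 := by simp [poch]

lemma poch_succ (a : ℂ) (k : ℕ) : poch a (k+1) = poch a k * (a + k) := by
  simp [poch, Finset.prod_range_succ]

lemma poch_add (a : ℂ) (m l : ℕ) : poch a (m + l) = poch a m * poch (a + m) l := by
  rw [poch, poch, poch, Finset.prod_range_add]
  congr 1
  refine Finset.prod_congr rfl fun i _ => ?_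
  push_cast; ring

lemma poch_one (a : ℂ) : poch a 1 = a := by simp [poch]

lemma poch_reflect (x : ℂ) (m : ℕ) : poch (1 - x - m) m = (-1)^m * poch x m := by
  induction m with
  | zero => simp [poch]
  | succ m ih =>
    push_cast
    have h1 : poch (1 - x - ((m:ℂ)+1)) (m+1) = (1 - x - ((m:ℂ)+1)) * poch (1 - x - (m:ℂ)) m := by
      have h2 := poch_add (1 - x - ((m:ℂ)+1)) 1 m
      rw [show 1 + m = m + 1 from by omega, poch_one] at h2
      rw [h2]
      congr 2
      ring
    rw [h1, ih, poch_succ]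
    ring

lemma poch_half (a : ℂ) (k : ℕ) :
    poch (a/2) k * poch ((a+1)/2) k * 4^k = poch a (2*k) := by
  induction k with
  | zero => simp [poch]
  | succ k ih =>
    rw [show 2*(k+1) = (2*k) + 1 + 1 from by omega]
    rw [poch_succ, poch_succ, poch_succ, poch_succ]
    push_cast
    linear_combination (a + 2*(k:ℂ)) * (a + 2*(k:ℂ) + 1) * ih

lemma poch_ne_zero_of_le {a : ℂ} {m : ℕ} (h : poch a m ≠ 0) {k : ℕ} (hk : k ≤ m) :
    poch a k ≠ 0 := by
  intro h0
  apply h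
  rw [show m = k + (m - k) from by omega, poch_add, h0, zero_mul]

lemma poch_neg_nat (n k : ℕ) : poch (-(n:ℂ)) k = (-1)^k * (n.descFactorial k : ℂ) := by
  induction k with
  | zero => simp [poch]
  | succ k ih =>
    rw [poch_succ, ih, Nat.descFactorial_succ]
    rcases le_or_gt k n with h | h
    · push_cast [Nat.cast_sub h]
      ring
    · rw [Nat.descFactorial_eq_zero_iff_lt.2 h]
      simp

lemma poch_neg_nat' (n k : ℕ) :
    poch (-(n:ℂ)) k = (-1)^k * (n.choose k : ℂ) * (k.factorial : ℂ) := by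
  rw [poch_neg_nat, Nat.descFactorial_eq_factorial_mul_choose]
  push_cast
  ring

lemma poch_vdm (X Y : ℂ) (m : ℕ) :
    poch (X + Y) m = ∑ j ∈ range (m+1), (m.choose j : ℂ) * poch X j * poch Y (m-j) := by
  induction m with
  | zero => simp [poch]
  | succ m ih =>
    rw [poch_succ, ih, Finset.sum_mul]
    have split : ∀ j ∈ range (m+1),
        (m.choose j : ℂ) * poch X j * poch Y (m-j) * (X + Y + m)
          = (m.choose j : ℂ) * poch X (j+1) * poch Y (m-j)
            + (m.choose j : ℂ) * poch X j * poch Y ((m-j)+1) := by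
      intro j hj
      have hj' : j ≤ m := by simp at hj; omega
      rw [poch_succ, poch_succ]
      have hc : ((m-j:ℕ):ℂ) = (m:ℂ) - j := by
        push_cast [Nat.cast_sub hj']; ring
      rw [hc]; ring
    rw [Finset.sum_congr rfl split, Finset.sum_add_distrib]
    rw [Finset.sum_range_succ' (fun j => (((m+1).choose j : ℕ) : ℂ) * poch X j * poch Y (m+1-j)) (m+1)]
    have e1 : ∀ j ∈ range (m+1),
        (((m+1).choose (j+1) : ℕ) : ℂ) * poch X (j+1) * poch Y (m+1-(j+1))
          = (m.choose j : ℂ) * poch X (j+1) * poch Y (m-j)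
            + (m.choose (j+1) : ℂ) * poch X (j+1) * poch Y (m-j) := by
      intro j hj
      rw [Nat.choose_succ_succ]
      have h2 : m+1-(j+1) = m - j := by omega
      rw [h2]; push_cast; ring
    rw [Finset.sum_congr rfl e1, Finset.sum_add_distrib]
    have e2 : ∑ j ∈ range (m+1), (m.choose j : ℂ) * poch X j * poch Y ((m-j)+1)
        = (∑ j ∈ range (m+1), (m.choose (j+1) : ℂ) * poch X (j+1) * poch Y (m-j))
          + (((m+1).choose 0 : ℕ) : ℂ) * poch X 0 * poch Y (m+1-0) := by
      rw [Finset.sum_range_succ' (fun j => (m.choose j : ℂ) * poch X j * poch Y ((m-j)+1)) m]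
      rw [Finset.sum_range_succ (fun j => (m.choose (j+1) : ℂ) * poch X (j+1) * poch Y (m-j)) m]
      have e3 : ∀ j ∈ range m,
          (m.choose (j+1) : ℂ) * poch X (j+1) * poch Y ((m-(j+1))+1)
            = (m.choose (j+1) : ℂ) * poch X (j+1) * poch Y (m-j) := by
        intro j hj
        have h4 : (m-(j+1))+1 = m-j := by simp at hj; omega
        rw [h4]
      rw [Finset.sum_congr rfl e3]
      simp [poch_zero]
    rw [e2]; ring

noncomputable def T (n : ℕ) (A B G : ℂ) : ℂ :=
  ∑ k ∈ range (n+1), ∑ j ∈ range (n-k+1),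
    ((n.choose k * (n-k).choose j : ℕ) : ℂ) * poch A (k+j) * poch B (n-k) * poch G (n-j)

lemma multinom_sym (n k j : ℕ) (h : k + j ≤ n) :
    n.choose k * (n-k).choose j = n.choose j * (n-j).choose k := by
  have h1 : n.choose k * (n-k).choose j * (k.factorial * j.factorial * (n-k-j).factorial)
      = n.factorial := by
    have a1 := Nat.choose_mul_factorial_mul_factorial (show j ≤ n - k by omega)
    have a2 := Nat.choose_mul_factorial_mul_factorial (show k ≤ n by omega)
    calc n.choose k * (n-k).choose j * (k.factorial * j.factorial * (n-k-j).factorial)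
        = n.choose k * k.factorial * ((n-k).choose j * j.factorial * ((n-k)-j).factorial) := by ring
      _ = n.choose k * k.factorial * (n-k).factorial := by rw [a1]
      _ = n.factorial := a2
  have h2 : n.choose j * (n-j).choose k * (k.factorial * j.factorial * (n-k-j).factorial)
      = n.factorial := by
    have a1 := Nat.choose_mul_factorial_mul_factorial (show k ≤ n - j by omega)
    have a2 := Nat.choose_mul_factorial_mul_factorial (show j ≤ n by omega)
    have hnn : n - j - k = n - k - j := by omega
    calc n.choose j * (n-j).choose k * (k.factorial * j.factorial * (n-k-j).factorial)
        = n.choose j * j.factorial * ((n-j).choose k * k.factorial * ((n-j)-k).factorial) := by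
          rw [hnn]; ring
      _ = n.choose j * j.factorial * (n-j).factorial := by rw [a1]
      _ = n.factorial := a2
  have hpos : 0 < k.factorial * j.factorial * (n-k-j).factorial := by positivity
  exact Nat.eq_of_mul_eq_mul_right hpos (h1.trans h2.symm)

lemma multinom_rot (n k j : ℕ) (h : k + j ≤ n) :
    n.choose k * (n-k).choose j = n.choose (n-k-j) * (n-(n-k-j)).choose j := by
  have h1 : n.choose k * (n-k).choose j * (k.factorial * j.factorial * (n-k-j).factorial)
      = n.factorial := by
    have a1 := Nat.choose_mul_factorial_mul_factorial (show j ≤ n - k by omega)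
    have a2 := Nat.choose_mul_factorial_mul_factorial (show k ≤ n by omega)
    calc n.choose k * (n-k).choose j * (k.factorial * j.factorial * (n-k-j).factorial)
        = n.choose k * k.factorial * ((n-k).choose j * j.factorial * ((n-k)-j).factorial) := by ring
      _ = n.choose k * k.factorial * (n-k).factorial := by rw [a1]
      _ = n.factorial := a2
  have h2 : n.choose (n-k-j) * (n-(n-k-j)).choose j * (k.factorial * j.factorial * (n-k-j).factorial)
      = n.factorial := by
    have a1 := Nat.choose_mul_factorial_mul_factorial (show j ≤ n - (n-k-j) by omega)
    have a2 := Nat.choose_mul_factorial_mul_factorial (show n-k-j ≤ n by omega)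
    have hk : n - (n-k-j) - j = k := by omega
    calc n.choose (n-k-j) * (n-(n-k-j)).choose j * (k.factorial * j.factorial * (n-k-j).factorial)
        = n.choose (n-k-j) * (n-k-j).factorial
            * ((n-(n-k-j)).choose j * j.factorial * ((n-(n-k-j))-j).factorial) := by
          rw [hk]; ring
      _ = n.choose (n-k-j) * (n-k-j).factorial * (n-(n-k-j)).factorial := by rw [a1]
      _ = n.factorial := a2
  have hpos : 0 < k.factorial * j.factorial * (n-k-j).factorial := by positivity
  exact Nat.eq_of_mul_eq_mul_right hpos (h1.trans h2.symm)

noncomputable def Tf (n : ℕ) (A B G : ℂ) (x : ℕ × ℕ) : ℂ :=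
  ((n.choose x.1 * (n-x.1).choose x.2 : ℕ) : ℂ) * poch A (x.1+x.2) * poch B (n-x.1) * poch G (n-x.2)

lemma T_eq_P (n : ℕ) (A B G : ℂ) :
    T n A B G = ∑ x ∈ (range (n+1) ×ˢ range (n+1)).filter (fun x => x.1 + x.2 ≤ n),
      Tf n A B G x := by
  rw [Finset.sum_filter, Finset.sum_product, T]
  refine Finset.sum_congr rfl fun k hk => ?_
  have hk' : k ≤ n := by simp at hk; omega
  have hr : range (n-k+1) = (range (n+1)).filter (fun j => k + j ≤ n) := by
    ext j; simp; omega
  rw [hr, Finset.sum_filter]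
  rfl

lemma T_swap23 (n : ℕ) (A B G : ℂ) : T n A B G = T n A G B := by
  rw [T_eq_P, T_eq_P]
  refine Finset.sum_nbij' (fun x => (x.2, x.1)) (fun x => (x.2, x.1)) ?_ ?_ ?_ ?_ ?_
  · intro a ha; simp at ha ⊢; omega
  · intro a ha; simp at ha ⊢; omega
  · intro a _; rfl
  · intro a _; rfl
  · intro a ha
    simp only [Finset.mem_filter, Finset.mem_product, Finset.mem_range] at ha
    unfold Tf
    simp only
    rw [multinom_sym n a.1 a.2 (by omega), Nat.add_comm a.1 a.2]
    ring

lemma T_swap12 (n : ℕ) (A B G : ℂ) : T n A B G = T n B A G := by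
  rw [T_eq_P, T_eq_P]
  refine Finset.sum_nbij' (fun x => (n - x.1 - x.2, x.2)) (fun x => (n - x.1 - x.2, x.2))
    ?_ ?_ ?_ ?_ ?_
  · intro a ha; simp at ha ⊢; omega
  · intro a ha; simp at ha ⊢; omega
  · intro a ha; simp at ha ⊢
    have : n - (n - a.1 - a.2) - a.2 = a.1 := by omega
    exact Prod.ext (by simpa using this) rfl
  · intro a ha; simp at ha ⊢
    have : n - (n - a.1 - a.2) - a.2 = a.1 := by omega
    exact Prod.ext (by simpa using this) rfl
  · intro a ha
    simp only [Finset.mem_filter, Finset.mem_product, Finset.mem_range] at ha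
    unfold Tf
    simp only
    rw [multinom_rot n a.1 a.2 (by omega)]
    have e1 : n - a.1 - a.2 + a.2 = n - a.1 := by omega
    have e2 : n - (n - a.1 - a.2) = a.1 + a.2 := by omega
    rw [e1, e2]
    ring


/-- `R n a b c = (1-a)_n (b)_n · ₄F₃(-n, a, a-c-n, c ; (a-n)/2, (1+a-n)/2, b ; 1/4)`. -/
noncomputable def R (n : ℕ) (a b c : ℂ) : ℂ :=
  poch (1 - a) n * poch b n *
    ∑ k ∈ Finset.range (n + 1),
      (poch (-(n : ℂ)) k * poch a k * poch (a - c - (n : ℂ)) k * poch c k) /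
        ((Nat.factorial k : ℂ) * poch ((a - (n : ℂ)) / 2) k *
          poch ((1 + a - (n : ℂ)) / 2) k * poch b k) * (1 / 4 : ℂ) ^ k


lemma term_eq (n k : ℕ) (hk : k ≤ n) (a b c : ℂ)
    (h2n : poch (a - n) (2*n) ≠ 0) (hb : poch b n ≠ 0) :
    poch (1 - a) n * poch b n *
      ((poch (-(n : ℂ)) k * poch a k * poch (a - c - (n : ℂ)) k * poch c k) /
        ((Nat.factorial k : ℂ) * poch ((a - (n : ℂ)) / 2) k *
          poch ((1 + a - (n : ℂ)) / 2) k * poch b k) * (1 / 4 : ℂ) ^ k)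
    = (n.choose k : ℂ) * poch c k * poch (a - c - n) k * poch (1 - b - n) (n-k)
        * poch (a - n + 2*k) (n-k) := by
  have h2k : poch (a - n) (2*k) ≠ 0 := poch_ne_zero_of_le h2n (by omega)
  have hbk : poch b k ≠ 0 := poch_ne_zero_of_le hb hk
  have hfk : ((k.factorial : ℕ) : ℂ) ≠ 0 := by
    exact_mod_cast Nat.cast_ne_zero.mpr k.factorial_ne_zero
  have hhalf : poch ((a - n)/2) k * poch ((1 + a - n)/2) k * 4^k = poch (a - n) (2*k) := by
    have h := poch_half (a - n) k
    rw [show ((a - n) + 1)/2 = (1 + a - n)/2 from by ring] at h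
    exact h
  have hP1 : poch ((a - n)/2) k ≠ 0 := by
    intro h0; apply h2k; rw [← hhalf, h0]; ring
  have hP2 : poch ((1 + a - n)/2) k ≠ 0 := by
    intro h0; apply h2k; rw [← hhalf, h0]; ring
  have e1 : poch (1 - a) n = (-1)^n * poch (a - n) n := by
    have h := poch_reflect (a - n) n
    rw [show 1 - (a - n) - n = 1 - a from by ring] at h
    exact h
  have e2 : poch (a - n) n * poch a k
      = poch ((a - n)/2) k * poch ((1 + a - n)/2) k * 4^k * poch (a - n + 2*k) (n-k) := by
    rw [hhalf]
    have l1 : poch (a - n) (n + k) = poch (a - n) n * poch a k := by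
      rw [poch_add]
      congr 2
      ring
    have l2 : poch (a - n) (n + k) = poch (a - n) (2*k) * poch (a - n + 2*k) (n-k) := by
      rw [show n + k = 2*k + (n-k) from by omega, poch_add]
      congr 2
      push_cast
      ring
    rw [← l1, l2]
  have e3 : poch b n = poch b k * poch (b + k) (n-k) := by
    nth_rewrite 1 [show n = k + (n-k) from by omega]
    rw [poch_add]
  have e4 : (-1 : ℂ)^k * poch (1 - b - n) (n-k) = (-1)^n * poch (b + k) (n-k) := by
    have h := poch_reflect (b + k) (n-k)
    have hc : ((n - k : ℕ) : ℂ) = (n : ℂ) - k := by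
      push_cast [Nat.cast_sub hk]; ring
    rw [hc, show 1 - (b + k) - ((n:ℂ) - k) = 1 - b - n from by ring] at h
    rw [h]
    have h6 : (-1 : ℂ)^(n-k) * (-1 : ℂ)^k = (-1 : ℂ)^n := by
      rw [← pow_add]
      congr 1
      omega
    linear_combination poch (b + k) (n - k) * h6
  have e5 := poch_neg_nat' n k
  rw [div_mul_eq_mul_div, ← mul_div_assoc, div_eq_iff (by
    exact mul_ne_zero (mul_ne_zero (mul_ne_zero hfk hP1) hP2) hbk)]
  rw [e1, e3, e5]
  have hq : (1/4 : ℂ)^k * 4^k = 1 := by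
    rw [← mul_pow]; norm_num
  have h7 : (-1 : ℂ)^k * (-1 : ℂ)^k = 1 := by
    rw [← mul_pow]; norm_num
  linear_combination
    ((-1:ℂ)^n * (-1:ℂ)^k * (n.choose k : ℂ) * (k.factorial : ℂ) * poch (a-c-(n:ℂ)) k
      * poch c k * poch b k * poch (b+(k:ℂ)) (n-k) * (1/4:ℂ)^k) * e2
    + ((-1:ℂ)^n * (-1:ℂ)^k * (n.choose k : ℂ) * (k.factorial : ℂ) * poch (a-c-(n:ℂ)) k
      * poch c k * poch b k * poch (b+(k:ℂ)) (n-k) * poch ((a-n)/2) k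
      * poch ((1+a-n)/2) k * poch (a - n + 2*k) (n-k)) * hq
    + (-((-1:ℂ)^k) * (n.choose k : ℂ) * (k.factorial : ℂ) * poch (a-c-(n:ℂ)) k
      * poch c k * poch b k * poch ((a-n)/2) k
      * poch ((1+a-n)/2) k * poch (a - n + 2*k) (n-k)) * e4
    + ((n.choose k : ℂ) * (k.factorial : ℂ) * poch (a-c-(n:ℂ)) k
      * poch c k * poch b k * poch ((a-n)/2) k
      * poch ((1+a-n)/2) k * poch (a - n + 2*k) (n-k) * poch (1-b-(n:ℂ)) (n-k)) * h7

lemma R_eq_T (n : ℕ) (a b c : ℂ)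
    (h2n : poch (a - n) (2*n) ≠ 0) (hb : poch b n ≠ 0) :
    R n a b c = T n (a - c - n) (1 - b - n) c := by
  rw [R, Finset.mul_sum, T]
  refine Finset.sum_congr rfl fun k hk => ?_
  have hk' : k ≤ n := by simp at hk; omega
  rw [term_eq n k hk' a b c h2n hb]
  have hv := poch_vdm (a-c-(n:ℂ)+k) (c+k) (n-k)
  rw [show (a-c-(n:ℂ)+k) + (c+k) = a - n + 2*k from by ring] at hv
  rw [hv, Finset.mul_sum]
  refine Finset.sum_congr rfl fun j hj => ?_
  have hj' : j ≤ n - k := by simp at hj; omega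
  rw [poch_add (a-c-(n:ℂ)) k j]
  have m2 : poch c (n-j) = poch c k * poch (c+k) (n-k-j) := by
    nth_rewrite 1 [show n-j = k + (n-k-j) from by omega]
    rw [poch_add]
  rw [m2]
  push_cast
  ring


/-- `V n x y z = R n (x-y-z) ((2+3x-y-z-n)/2) ((x+y-3z-n)/2)`. -/
noncomputable def V (n : ℕ) (x y z : ℂ) : ℂ :=
  R n (x - y - z) ((2 + 3 * x - y - z - (n : ℂ)) / 2) ((x + y - 3 * z - (n : ℂ)) / 2)


lemma V_eq_T (n : ℕ) (x y z : ℂ)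
    (h1 : poch (x - y - z - (n : ℂ)) (2 * n) ≠ 0)
    (h2 : poch ((2 + 3 * x - y - z - (n : ℂ)) / 2) n ≠ 0) :
    V n x y z = T n ((x + z - 3*y - (n:ℂ))/2) ((y + z - 3*x - (n:ℂ))/2)
      ((x + y - 3*z - (n:ℂ))/2) := by
  rw [V, R_eq_T n _ _ _ (by
      have : x - y - z - (n : ℂ) = (x - y - z) - (n:ℂ) := by ring
      rw [← this]; exact h1) h2]
  congr 1
  · ring
  · ring


theorem stmt_14 (n : ℕ) (x y z : ℂ)
    (h : ∀ p : ℂ × ℂ × ℂ,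
      p ∈ ({(x, y, z), (x, z, y), (y, x, z), (y, z, x), (z, x, y), (z, y, x)} :
        Set (ℂ × ℂ × ℂ)) →
      poch (p.1 - p.2.1 - p.2.2 - (n : ℂ)) (2 * n) ≠ 0 ∧
      poch ((2 + 3 * p.1 - p.2.1 - p.2.2 - (n : ℂ)) / 2) n ≠ 0) :
    V n x y z = V n x z y ∧ V n x y z = V n y x z ∧ V n x y z = V n y z x ∧
      V n x y z = V n z x y ∧ V n x y z = V n z y x := by
  obtain ⟨hxyz1, hxyz2⟩ := h (x, y, z) (by simp)
  obtain ⟨hxzy1, hxzy2⟩ := h (x, z, y) (by simp)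
  obtain ⟨hyxz1, hyxz2⟩ := h (y, x, z) (by simp)
  obtain ⟨hyzx1, hyzx2⟩ := h (y, z, x) (by simp)
  obtain ⟨hzxy1, hzxy2⟩ := h (z, x, y) (by simp)
  obtain ⟨hzyx1, hzyx2⟩ := h (z, y, x) (by simp)
  set A := (y + z - 3*x - (n:ℂ))/2 with hA
  set B := (x + z - 3*y - (n:ℂ))/2 with hB
  set C := (x + y - 3*z - (n:ℂ))/2 with hC
  have exyz : V n x y z = T n B A C := V_eq_T n x y z hxyz1 hxyz2
  have exzy : V n x z y = T n C A B := by
    rw [V_eq_T n x z y hxzy1 hxzy2, hA, hB, hC]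
    congr 1 <;> try ring
  have eyxz : V n y x z = T n A B C := by
    rw [V_eq_T n y x z hyxz1 hyxz2, hA, hB, hC]
    congr 1 <;> try ring
  have eyzx : V n y z x = T n C B A := by
    rw [V_eq_T n y z x hyzx1 hyzx2, hA, hB, hC]
    congr 1 <;> try ring
  have ezxy : V n z x y = T n A C B := by
    rw [V_eq_T n z x y hzxy1 hzxy2, hA, hB, hC]
    congr 1 <;> try ring
  have ezyx : V n z y x = T n B C A := by
    rw [V_eq_T n z y x hzyx1 hzyx2, hA, hB, hC]
    congr 1 <;> try ring
  refine ⟨?_, ?_, ?_, ?_, ?_⟩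
  · rw [exyz, exzy, T_swap12 n B A C, T_swap23 n A B C, T_swap12 n A C B]
  · rw [exyz, eyxz, T_swap12 n B A C]
  · rw [exyz, eyzx, T_swap12 n B A C, T_swap23 n A B C, T_swap12 n A C B, T_swap23 n C A B]
  · rw [exyz, ezxy, T_swap12 n B A C, T_swap23 n A B C]
  · rw [exyz, ezyx, T_swap23 n B A C]
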